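/- Let 0 < q < 1, β ∈ [0,1) with β ≠ 1/2, and let (n_k) be an increasing sequence of natural numbers with f : ℕ → ℝ such that f(n_k) → ∞, n_k − f(n_k) → ∞, and {f(n_k)} = β for all k. Let X_{n_k} ∼ KB(n_k, q^{−f(n_k)}, q) with mean μ_{n_k} = ∑_{i=0}^{n_k−1} 1/(1 + q^{f(n_k)−i}), and set δ = ⌊β + c(β, q)⌋ (so δ = 0 if β < 1/2 and δ = 1 if β > 1/2). Then for every integer x, P(X_{n_k} = ⌊μ_{n_k}⌋ + x) → e_q(q) · e_q(−q^{β}) · e_q(−q^{1−β}) · q^{(δ + x − 1)(δ + x − 2β)/2} as k → ∞. -/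

import Mathlib

open Filter Finset

/-- The q-shifted factorial `(z;q)_n = ∏_{i=0}^{n-1} (1 - z q^i)`. -/
noncomputable def qPoch (q z : ℝ) (n : ℕ) : ℝ := ∏ i ∈ range n, (1 - z * q ^ i)

/-- The q-binomial coefficient `[n choose k]_q = (q;q)_n / ((q;q)_k (q;q)_{n-k})`. -/
noncomputable def qBinom (q : ℝ) (n k : ℕ) : ℝ := qPoch q q n / (qPoch q q k * qPoch q q (n - k))

/-- The q-exponential `e_q(z) = 1/(z;q)_∞`. -/
noncomputable def qExp (q z : ℝ) : ℝ := (∏' i : ℕ, (1 - z * q ^ i))⁻¹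

/-- The probability `P(X = y)` for `X ∼ KB(n, θ, q)`, extended by `0` outside `{0, …, n}`. -/
noncomputable def kbProb (q θ : ℝ) (n : ℕ) (y : ℤ) : ℝ :=
  if 0 ≤ y ∧ y ≤ (n : ℤ) then
    qBinom q n y.toNat * θ ^ y.toNat * q ^ (y.toNat * (y.toNat - 1) / 2) /
      ∏ i ∈ range n, (1 + θ * q ^ i)
  else 0

/-- The constant `c(β, q)` from the paper. -/
noncomputable def cConst (q β : ℝ) : ℝ :=
  1 - 1 / (1 + q ^ (-β)) - β
    - ∑' ℓ : ℕ, 1 / (1 + q ^ (-(ℓ : ℝ) - β - 1))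
    + ∑' ℓ : ℕ, 1 / (1 + q ^ (-(ℓ : ℝ) + β - 1))

section KTDNhelpers

variable {q : ℝ}

lemma KTDN.term_lt (hq0 : 0 < q) (hq1 : q < 1) {a b : ℝ} (hab : a < b) :
    1 / (1 + q ^ a) < 1 / (1 + q ^ b) := by
  have h := Real.rpow_lt_rpow_of_exponent_gt hq0 hq1 hab
  have hb := Real.rpow_pos_of_pos hq0 b
  apply one_div_lt_one_div_of_lt (by linarith) (by linarith)

lemma KTDN.term_le (hq0 : 0 < q) (hq1 : q < 1) {a b : ℝ} (hab : a ≤ b) :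
    1 / (1 + q ^ a) ≤ 1 / (1 + q ^ b) := by
  rcases eq_or_lt_of_le hab with h | h
  · rw [h]
  · exact (KTDN.term_lt hq0 hq1 h).le

lemma KTDN.term_lt_one (hq0 : 0 < q) (a : ℝ) : 1 / (1 + q ^ a) < 1 := by
  have := Real.rpow_pos_of_pos hq0 a
  rw [div_lt_one (by linarith)]; linarith

lemma KTDN.summable_term (hq0 : 0 < q) (hq1 : q < 1) (c : ℝ) :
    Summable (fun ℓ : ℕ => 1 / (1 + q ^ (c - (ℓ : ℝ)))) := by
  have hgeo : Summable (fun ℓ : ℕ => q ^ (-c) * q ^ ℓ) :=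
    (summable_geometric_of_lt_one hq0.le hq1).mul_left _
  refine Summable.of_nonneg_of_le (fun ℓ => by positivity) (fun ℓ => ?_) hgeo
  have h1 : (0:ℝ) < q ^ (c - (ℓ:ℝ)) := Real.rpow_pos_of_pos hq0 _
  have h2 : (0:ℝ) < q ^ ((ℓ:ℝ) - c) := Real.rpow_pos_of_pos hq0 _
  have h3 : q ^ (c - (ℓ:ℝ)) * q ^ ((ℓ:ℝ) - c) = 1 := by
    rw [← Real.rpow_add hq0]; norm_num
  have h4 : q ^ ((ℓ:ℝ) - c) = q ^ (-c) * q ^ ℓ := by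
    rw [← Real.rpow_natCast q ℓ, ← Real.rpow_add hq0]; ring_nf
  rw [div_le_iff₀ (by linarith), ← h4]
  nlinarith

lemma KTDN.hasProd_one_sub {z ε : ℝ} (hq0 : 0 < q) (hq1 : q < 1) (hε : 0 < ε)
    (hlb : ∀ i : ℕ, ε ≤ 1 - z * q ^ i) :
    HasProd (fun i : ℕ => 1 - z * q ^ i) (∏' i : ℕ, (1 - z * q ^ i)) ∧
      0 < ∏' i : ℕ, (1 - z * q ^ i) := by
  have hpos : ∀ i, 0 < 1 - z * q ^ i := fun i => lt_of_lt_of_le hε (hlb i)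
  have hsum : Summable (fun i : ℕ => Real.log (1 - z * q ^ i)) := by
    have hgeo : Summable (fun i : ℕ => |z| * (1 + ε⁻¹) * q ^ i) :=
      (summable_geometric_of_lt_one hq0.le hq1).mul_left _
    refine Summable.of_abs (hgeo.of_nonneg_of_le (fun i => abs_nonneg _) fun i => ?_)
    set x := 1 - z * q ^ i with hx
    have hx0 : 0 < x := hpos i
    have hxe : ε ≤ x := hlb i
    have h1 : Real.log x ≤ x - 1 := Real.log_le_sub_one_of_pos hx0
    have h2 : 1 - x⁻¹ ≤ Real.log x := Real.one_sub_inv_le_log_of_pos hx0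
    have hqp : (0:ℝ) < q ^ i := by positivity
    have h7 : z * q ^ i ≤ |z| * q ^ i := by
      have := le_abs_self z; nlinarith
    have h8 : -(|z| * q ^ i) ≤ z * q ^ i := by
      have := neg_abs_le z; nlinarith
    have hinv : x * x⁻¹ = 1 := mul_inv_cancel₀ hx0.ne'
    have h5 : x⁻¹ ≤ ε⁻¹ := by
      apply inv_anti₀ hε hxe
    have h6 : 0 < x⁻¹ := inv_pos.2 hx0
    have hieps : 0 < ε⁻¹ := inv_pos.2 hε
    rw [abs_le]
    constructor
    · have key : x⁻¹ - 1 ≤ |z| * q ^ i * ε⁻¹ := by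
        have hxi : x⁻¹ - 1 = (z * q ^ i) * x⁻¹ := by
          have : x⁻¹ * (1 - z * q ^ i) = 1 := by rw [← hx]; linarith [hinv]
          nlinarith
        rw [hxi]
        rcases le_or_gt 0 (z * q ^ i) with h | h
        · calc (z * q ^ i) * x⁻¹ ≤ (|z| * q ^ i) * ε⁻¹ := by
                apply mul_le_mul h7 h5 h6.le (by positivity)
            _ = |z| * q ^ i * ε⁻¹ := by ring
        · have : (z * q ^ i) * x⁻¹ ≤ 0 := mul_nonpos_of_nonpos_of_nonneg h.le h6.le
          nlinarith [abs_nonneg z]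
      nlinarith
    · nlinarith [abs_nonneg z]
  constructor
  · exact (Real.multipliable_of_summable_log hpos hsum).hasProd
  · have h := Real.rexp_tsum_eq_tprod (f := fun i => 1 - z * q ^ i) hpos hsum
    rw [← h]
    exact Real.exp_pos _

lemma KTDN.flip_term (hq0 : 0 < q) (a : ℝ) :
    1 / (1 + q ^ a) = 1 - 1 / (1 + q ^ (-a)) := by
  have h1 : q ^ (-a) * q ^ a = 1 := by rw [← Real.rpow_add hq0]; norm_num
  have h2 : (0:ℝ) < 1 + q ^ a := by positivity
  have h3 : (0:ℝ) < 1 + q ^ (-a) := by positivity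
  field_simp
  nlinarith

lemma KTDN.rpow_sum (hq0 : 0 < q) (n : ℕ) (a : ℕ → ℝ) :
    q ^ (∑ i ∈ range n, a i) = ∏ i ∈ range n, q ^ (a i) := by
  induction n with
  | zero => simp
  | succ n ih => rw [sum_range_succ, prod_range_succ, Real.rpow_add hq0, ih]

lemma KTDN.mu_split (hq0 : 0 < q) (β : ℝ) (M N : ℕ) (hMN : M + 1 ≤ N) :
    ∑ i ∈ range N, 1 / (1 + q ^ (((M : ℝ) + β) - (i : ℝ)))
      = ((M : ℝ) + 1) - (∑ ℓ ∈ range (M + 1), 1 / (1 + q ^ (-(ℓ : ℝ) - β)))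
        + ∑ ℓ ∈ range (N - (M + 1)), 1 / (1 + q ^ (-(ℓ : ℝ) + β - 1)) := by
  have hsplit : N = (M + 1) + (N - (M + 1)) := by omega
  rw [hsplit, Finset.sum_range_add]
  congr 1
  · rw [← Finset.sum_range_reflect]
    have hterm : ∀ ℓ ∈ range (M + 1),
        1 / (1 + q ^ (((M : ℝ) + β) - ((M + 1 - 1 - ℓ : ℕ) : ℝ)))
          = 1 - 1 / (1 + q ^ (-(ℓ : ℝ) - β)) := by
      intro ℓ hℓ
      rw [mem_range] at hℓ
      have hcast : ((M + 1 - 1 - ℓ : ℕ) : ℝ) = (M : ℝ) - (ℓ : ℝ) := by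
        have : M + 1 - 1 - ℓ = M - ℓ := by omega
        rw [this, Nat.cast_sub (by omega)]
      rw [hcast]
      have he : ((M : ℝ) + β) - ((M : ℝ) - (ℓ : ℝ)) = (ℓ : ℝ) + β := by ring
      rw [he, KTDN.flip_term hq0 ((ℓ : ℝ) + β)]
      ring_nf
    rw [Finset.sum_congr rfl hterm, Finset.sum_sub_distrib, Finset.sum_const, card_range]
    push_cast
    ring
  · have hr : M + 1 + (N - (M + 1)) - (M + 1) = N - (M + 1) := by omega
    rw [hr]
    exact Finset.sum_congr rfl fun ℓ _ => by
      congr 1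
      push_cast
      ring_nf

lemma KTDN.gauss (M : ℕ) (β : ℝ) :
    ∑ ℓ ∈ range (M + 1), (-(ℓ : ℝ) - β)
      = -(((M : ℝ)) * ((M : ℝ) + 1) / 2 + ((M : ℝ) + 1) * β) := by
  have h : ∑ ℓ ∈ range (M + 1), (ℓ : ℝ) = (M : ℝ) * ((M : ℝ) + 1) / 2 := by
    induction M with
    | zero => simp
    | succ n ih => rw [sum_range_succ, ih]; push_cast; ring
  rw [Finset.sum_sub_distrib, Finset.sum_const, card_range, Finset.sum_neg_distrib, h]
  push_cast
  ring

lemma KTDN.den_split (hq0 : 0 < q) (β : ℝ) (M N : ℕ) (hMN : M + 1 ≤ N) :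
    ∏ i ∈ range N, (1 + q ^ (-((M : ℝ) + β)) * q ^ i)
      = q ^ (-(((M : ℝ)) * ((M : ℝ) + 1) / 2 + ((M : ℝ) + 1) * β))
        * (∏ ℓ ∈ range (M + 1), (1 - (-q ^ β) * q ^ ℓ))
        * ∏ ℓ ∈ range (N - (M + 1)), (1 - (-q ^ (1 - β)) * q ^ ℓ) := by
  have hfac : ∀ i : ℕ, 1 + q ^ (-((M : ℝ) + β)) * q ^ i = 1 + q ^ ((i : ℝ) - ((M : ℝ) + β)) := by
    intro i
    rw [← Real.rpow_natCast q i, ← Real.rpow_add hq0]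
    ring_nf
  rw [Finset.prod_congr rfl fun i _ => hfac i]
  have hsplit : N = (M + 1) + (N - (M + 1)) := by omega
  rw [hsplit, Finset.prod_range_add]
  have hr : M + 1 + (N - (M + 1)) - (M + 1) = N - (M + 1) := by omega
  rw [hr]
  have h1 : ∏ i ∈ range (M + 1), (1 + q ^ ((i : ℝ) - ((M : ℝ) + β)))
      = q ^ (-(((M : ℝ)) * ((M : ℝ) + 1) / 2 + ((M : ℝ) + 1) * β))
        * ∏ ℓ ∈ range (M + 1), (1 - (-q ^ β) * q ^ ℓ) := by
    rw [← Finset.prod_range_reflect]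
    have hterm : ∀ ℓ ∈ range (M + 1),
        1 + q ^ (((M + 1 - 1 - ℓ : ℕ) : ℝ) - ((M : ℝ) + β))
          = q ^ (-(ℓ : ℝ) - β) * (1 - (-q ^ β) * q ^ ℓ) := by
      intro ℓ hℓ
      rw [mem_range] at hℓ
      have hcast : ((M + 1 - 1 - ℓ : ℕ) : ℝ) = (M : ℝ) - (ℓ : ℝ) := by
        have : M + 1 - 1 - ℓ = M - ℓ := by omega
        rw [this, Nat.cast_sub (by omega)]
      rw [hcast]
      have he : ((M : ℝ) - (ℓ : ℝ)) - ((M : ℝ) + β) = -(ℓ : ℝ) - β := by ring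
      rw [he]
      have hm : q ^ (-(ℓ : ℝ) - β) * (q ^ β * q ^ ℓ) = 1 := by
        rw [← Real.rpow_natCast q ℓ, ← Real.rpow_add hq0, ← Real.rpow_add hq0,
          show (-(ℓ : ℝ) - β + (β + (ℓ : ℝ))) = 0 by ring, Real.rpow_zero]
      nlinarith [hm]
    rw [Finset.prod_congr rfl hterm, Finset.prod_mul_distrib, ← KTDN.rpow_sum hq0,
      KTDN.gauss M β]
  have h2 : ∏ i ∈ range (N - (M + 1)), (1 + q ^ (((M + 1 + i : ℕ) : ℝ) - ((M : ℝ) + β)))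
      = ∏ ℓ ∈ range (N - (M + 1)), (1 - (-q ^ (1 - β)) * q ^ ℓ) := by
    refine Finset.prod_congr rfl fun i _ => ?_
    have he : ((M + 1 + i : ℕ) : ℝ) - ((M : ℝ) + β) = (1 - β) + (i : ℝ) := by
      push_cast; ring
    rw [he, Real.rpow_add hq0, Real.rpow_natCast]
    ring
  rw [h1, h2]

lemma KTDN.cast_tri (Y : ℕ) : ((Y * (Y - 1) / 2 : ℕ) : ℝ) = (Y : ℝ) * ((Y : ℝ) - 1) / 2 := by
  cases Y with
  | zero => simp
  | succ n =>
    have he : (n + 1) * (n + 1 - 1) = n * (n + 1) := by rw [Nat.add_sub_cancel, Nat.mul_comm]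
    rw [he]
    have h2 : (2 : ℕ) ∣ n * (n + 1) := (Nat.even_mul_succ_self n).two_dvd
    rw [Nat.cast_div h2 (by norm_num)]
    push_cast
    ring

lemma KTDN.prod_one_sub_pos (hq0 : 0 < q) (hq1 : q < 1) {z : ℝ} (hz : z ≤ 0 ∨ z = q) (n : ℕ) :
    0 < ∏ ℓ ∈ range n, (1 - z * q ^ ℓ) := by
  apply Finset.prod_pos
  intro i _
  rcases hz with h | h
  · nlinarith [pow_pos hq0 i]
  · have : q ^ i ≤ 1 := pow_le_one₀ hq0.le hq1.le
    nlinarith [pow_pos hq0 i]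

lemma KTDN.kb_formula (hq0 : 0 < q) (hq1 : q < 1) (β : ℝ) (M N Y : ℕ) (j : ℤ)
    (hMN : M + 1 ≤ N) (hY : (Y : ℝ) = (M : ℝ) + (j : ℝ)) :
    qBinom q N Y * (q ^ (-((M : ℝ) + β))) ^ Y * q ^ (Y * (Y - 1) / 2) /
        ∏ i ∈ range N, (1 + q ^ (-((M : ℝ) + β)) * q ^ i)
      = qBinom q N Y * q ^ (((j : ℝ) - 1) * ((j : ℝ) - 2 * β) / 2)
          / ((∏ ℓ ∈ range (M + 1), (1 - (-q ^ β) * q ^ ℓ))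
            * ∏ ℓ ∈ range (N - (M + 1)), (1 - (-q ^ (1 - β)) * q ^ ℓ)) := by
  rw [KTDN.den_split hq0 β M N hMN]
  set E : ℝ := -(((M : ℝ)) * ((M : ℝ) + 1) / 2 + ((M : ℝ) + 1) * β) with hE
  have key : (q ^ (-((M : ℝ) + β))) ^ Y * q ^ (Y * (Y - 1) / 2)
      = q ^ (((j : ℝ) - 1) * ((j : ℝ) - 2 * β) / 2) * q ^ E := by
    rw [← Real.rpow_natCast (q ^ (-((M : ℝ) + β))) Y, ← Real.rpow_mul hq0.le,
      ← Real.rpow_natCast q (Y * (Y - 1) / 2), KTDN.cast_tri,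
      ← Real.rpow_add hq0, ← Real.rpow_add hq0]
    congr 1
    rw [hY, hE]
    ring
  have hA : (0:ℝ) < ∏ ℓ ∈ range (M + 1), (1 - (-q ^ β) * q ^ ℓ) :=
    KTDN.prod_one_sub_pos hq0 hq1 (Or.inl (neg_nonpos.mpr (Real.rpow_pos_of_pos hq0 β).le)) _
  have hB : (0:ℝ) < ∏ ℓ ∈ range (N - (M + 1)), (1 - (-q ^ (1 - β)) * q ^ ℓ) :=
    KTDN.prod_one_sub_pos hq0 hq1
      (Or.inl (neg_nonpos.mpr (Real.rpow_pos_of_pos hq0 (1 - β)).le)) _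
  have hEne : q ^ E ≠ 0 := (Real.rpow_pos_of_pos hq0 E).ne'
  rw [mul_assoc, key]
  field_simp

end KTDNhelpers

set_option maxHeartbeats 1600000

/-- Along a subsequence `n_k` with `{f(n_k)} = β` constant (`β ≠ 1/2`),
`f(n_k) → ∞` and `n_k - f(n_k) → ∞`, the Kemp probabilities `P(X_{n_k} = ⌊μ_{n_k}⌋ + x)`
for `X_{n_k} ∼ KB(n_k, q^{-f(n_k)}, q)` converge, for every integer `x`, to
`e_q(q) e_q(-q^β) e_q(-q^{1-β}) q^{(δ+x-1)(δ+x-2β)/2}` where `δ = ⌊β + c(β,q)⌋`. -/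
theorem kemp_to_discrete_normal (q β : ℝ) (hq0 : 0 < q) (hq1 : q < 1)
    (hβ0 : 0 ≤ β) (hβ1 : β < 1) (hβhalf : β ≠ 1 / 2)
    (nseq : ℕ → ℕ) (hmono : StrictMono nseq) (f : ℕ → ℝ)
    (hf : Tendsto (fun k => f (nseq k)) atTop atTop)
    (hnf : Tendsto (fun k => (nseq k : ℝ) - f (nseq k)) atTop atTop)
    (hfrac : ∀ k, Int.fract (f (nseq k)) = β)
    (μ : ℕ → ℝ)
    (hμ : ∀ k, μ k = ∑ i ∈ range (nseq k), 1 / (1 + q ^ (f (nseq k) - (i : ℝ))))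
    (δ : ℤ) (hδ : δ = ⌊β + cConst q β⌋) :
    ∀ x : ℤ,
      Tendsto (fun k => kbProb q (q ^ (-f (nseq k))) (nseq k) (⌊μ k⌋ + x)) atTop
        (nhds (qExp q q * qExp q (-q ^ β) * qExp q (-q ^ (1 - β)) *
          q ^ ((((δ : ℝ) + (x : ℝ) - 1) * ((δ : ℝ) + (x : ℝ) - 2 * β)) / 2))) := by
  intro x
  set j : ℤ := δ + x with hj
  -- the floor sequence
  set m : ℕ → ℤ := fun k => ⌊f (nseq k)⌋ with hm_def
  have hFk : ∀ k, f (nseq k) = (m k : ℝ) + β := by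
    intro k
    have h := hfrac k
    have h2 : Int.fract (f (nseq k)) + ⌊f (nseq k)⌋ = f (nseq k) := Int.fract_add_floor _
    rw [h] at h2
    simp only [hm_def]
    linarith
  have hm_ge : ∀ C : ℤ, ∀ᶠ k in atTop, C ≤ m k := by
    intro C
    filter_upwards [hf.eventually_ge_atTop (C : ℝ)] with k hk
    exact Int.le_floor.mpr hk
  have hd_ge : ∀ C : ℤ, ∀ᶠ k in atTop, C ≤ (nseq k : ℤ) - m k := by
    intro C
    filter_upwards [hnf.eventually_ge_atTop ((C : ℝ) + 1)] with k hk
    have h1 : (m k : ℝ) ≤ f (nseq k) := Int.floor_le _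
    have h2 : (C : ℝ) ≤ (nseq k : ℝ) - (m k : ℝ) := by linarith
    exact_mod_cast h2
  set M : ℕ → ℕ := fun k => (m k).toNat with hM_def
  set Y : ℕ → ℕ := fun k => (m k + j).toNat with hY_def
  -- the two series
  have hterm_pos : ∀ a : ℝ, 0 < 1 / (1 + q ^ a) := fun a => by
    have := Real.rpow_pos_of_pos hq0 a; positivity
  have hs : Summable (fun ℓ : ℕ => 1 / (1 + q ^ (-(ℓ : ℝ) - β))) := by
    refine (KTDN.summable_term hq0 hq1 (-β)).congr fun ℓ => ?_
    rw [show (-β - (ℓ : ℝ)) = (-(ℓ : ℝ) - β) from by ring]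
  have ht : Summable (fun ℓ : ℕ => 1 / (1 + q ^ (-(ℓ : ℝ) + β - 1))) := by
    refine (KTDN.summable_term hq0 hq1 (β - 1)).congr fun ℓ => ?_
    rw [show (β - 1 - (ℓ : ℝ)) = (-(ℓ : ℝ) + β - 1) from by ring]
  have hs1 : Summable (fun ℓ : ℕ => 1 / (1 + q ^ (-((ℓ + 1 : ℕ) : ℝ) - β))) :=
    (summable_nat_add_iff 1).2 hs
  have ht1 : Summable (fun ℓ : ℕ => 1 / (1 + q ^ (-((ℓ + 1 : ℕ) : ℝ) + β - 1))) :=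
    (summable_nat_add_iff 1).2 ht
  have hsT : Tendsto (fun N => ∑ ℓ ∈ range N, 1 / (1 + q ^ (-(ℓ : ℝ) - β))) atTop
      (nhds (∑' ℓ : ℕ, 1 / (1 + q ^ (-(ℓ : ℝ) - β)))) := hs.hasSum.tendsto_sum_nat
  have htT : Tendsto (fun N => ∑ ℓ ∈ range N, 1 / (1 + q ^ (-(ℓ : ℝ) + β - 1))) atTop
      (nhds (∑' ℓ : ℕ, 1 / (1 + q ^ (-(ℓ : ℝ) + β - 1)))) := ht.hasSum.tendsto_sum_nat
  set Sg : ℝ := ∑' ℓ : ℕ, 1 / (1 + q ^ (-(ℓ : ℝ) - β)) with hSg_def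
  set Tg : ℝ := ∑' ℓ : ℕ, 1 / (1 + q ^ (-(ℓ : ℝ) + β - 1)) with hTg_def
  -- the limit g of μ k - m k
  set g : ℝ := 1 - Sg + Tg with hg_def
  have hshiftS : Sg = 1 / (1 + q ^ (-((0 : ℕ) : ℝ) - β))
      + ∑' ℓ : ℕ, 1 / (1 + q ^ (-((ℓ + 1 : ℕ) : ℝ) - β)) := by
    rw [hSg_def]; exact Summable.tsum_eq_zero_add hs
  have hshiftT : Tg = 1 / (1 + q ^ (-((0 : ℕ) : ℝ) + β - 1))
      + ∑' ℓ : ℕ, 1 / (1 + q ^ (-((ℓ + 1 : ℕ) : ℝ) + β - 1)) := by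
    rw [hTg_def]; exact Summable.tsum_eq_zero_add ht
  have hgc : β + cConst q β = g := by
    rw [cConst]
    have e1 : ∑' ℓ : ℕ, 1 / (1 + q ^ (-(ℓ : ℝ) - β - 1))
        = ∑' ℓ : ℕ, 1 / (1 + q ^ (-((ℓ + 1 : ℕ) : ℝ) - β)) := by
      refine tsum_congr fun ℓ => ?_
      rw [show (-(ℓ : ℝ) - β - 1) = (-((ℓ + 1 : ℕ) : ℝ) - β) from by push_cast; ring]
    have e3 : 1 / (1 + q ^ (-((0 : ℕ) : ℝ) - β)) = 1 / (1 + q ^ (-β)) := by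
      norm_num
    rw [e1, ← hTg_def, hg_def, hshiftS, e3]
    ring
  -- strict bounds for g
  have hbounds : (δ : ℝ) < g ∧ g < (δ : ℝ) + 1 := by
    rcases lt_or_gt_of_ne hβhalf with hβlt | hβgt
    · -- β < 1/2, here 0 < g < 1 and δ = 0
      have hTS : Tg < Sg := by
        rw [hSg_def, hTg_def]
        refine Summable.tsum_lt_tsum_of_nonneg (fun ℓ => (hterm_pos _).le)
          (fun ℓ => KTDN.term_le hq0 hq1 (by linarith))
          (i := 0) (KTDN.term_lt hq0 hq1 (by push_cast; linarith)) hs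
      have hsmall : ∑' ℓ : ℕ, 1 / (1 + q ^ (-((ℓ + 1 : ℕ) : ℝ) - β)) ≤ Tg := by
        rw [hTg_def]
        exact Summable.tsum_le_tsum
          (fun ℓ => KTDN.term_le hq0 hq1 (by push_cast; linarith)) hs1 ht
      have hs0 : 1 / (1 + q ^ (-((0 : ℕ) : ℝ) - β)) < 1 := KTDN.term_lt_one hq0 _
      have hg0 : 0 < g := by rw [hg_def]; linarith [hshiftS]
      have hg1 : g < 1 := by rw [hg_def]; linarith
      have hδ0 : δ = 0 := by
        rw [hδ, hgc]
        exact Int.floor_eq_zero_iff.mpr ⟨hg0.le, hg1⟩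
      rw [hδ0]
      norm_num
      exact ⟨hg0, hg1⟩
    · -- β > 1/2, here 1 < g < 2 and δ = 1
      have hST : Sg < Tg := by
        rw [hSg_def, hTg_def]
        refine Summable.tsum_lt_tsum_of_nonneg (fun ℓ => (hterm_pos _).le)
          (fun ℓ => KTDN.term_le hq0 hq1 (by linarith))
          (i := 0) (KTDN.term_lt hq0 hq1 (by push_cast; linarith)) ht
      have hsmall : ∑' ℓ : ℕ, 1 / (1 + q ^ (-((ℓ + 1 : ℕ) : ℝ) + β - 1)) ≤ Sg := by
        rw [hSg_def]
        exact Summable.tsum_le_tsum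
          (fun ℓ => KTDN.term_le hq0 hq1 (by push_cast; linarith)) ht1 hs
      have ht0 : 1 / (1 + q ^ (-((0 : ℕ) : ℝ) + β - 1)) < 1 := KTDN.term_lt_one hq0 _
      have hg1 : 1 < g := by rw [hg_def]; linarith
      have hg2 : g < 2 := by rw [hg_def]; linarith [hshiftT]
      have hδ1 : δ = 1 := by
        rw [hδ, hgc]
        rw [Int.floor_eq_iff]
        constructor <;> push_cast <;> linarith
      rw [hδ1]
      norm_num
      exact ⟨hg1, hg2⟩
  -- convergence of μ k - m k to g
  have hM1 : Tendsto (fun k => M k + 1) atTop atTop := by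
    refine tendsto_atTop.2 fun C => ?_
    filter_upwards [hm_ge C] with k hk
    simp only [hM_def]
    omega
  have hNM : Tendsto (fun k => nseq k - (M k + 1)) atTop atTop := by
    refine tendsto_atTop.2 fun C => ?_
    filter_upwards [hd_ge ((C : ℤ) + 1), hm_ge 0] with k h1 h2
    simp only [hM_def]
    omega
  have hmain_ev : ∀ᶠ k in atTop, μ k - (m k : ℝ)
      = 1 - (∑ ℓ ∈ range (M k + 1), 1 / (1 + q ^ (-(ℓ : ℝ) - β)))
        + ∑ ℓ ∈ range (nseq k - (M k + 1)), 1 / (1 + q ^ (-(ℓ : ℝ) + β - 1)) := by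
    filter_upwards [hm_ge 0, hd_ge 1] with k h1 h2
    have hmM : ((M k : ℕ) : ℝ) = (m k : ℝ) := by
      have h3 : ((m k).toNat : ℤ) = m k := Int.toNat_of_nonneg h1
      simp only [hM_def]
      exact_mod_cast h3
    have hMN : M k + 1 ≤ nseq k := by simp only [hM_def]; omega
    have hexp : f (nseq k) = ((M k : ℕ) : ℝ) + β := by rw [hFk k, hmM]
    rw [hμ k]
    simp only [hexp]
    rw [KTDN.mu_split hq0 β (M k) (nseq k) hMN]
    rw [hmM]
    ring
  have hmuT : Tendsto (fun k => μ k - (m k : ℝ)) atTop (nhds g) := by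
    have hb : Tendsto (fun k => 1 - (∑ ℓ ∈ range (M k + 1), 1 / (1 + q ^ (-(ℓ : ℝ) - β)))
        + ∑ ℓ ∈ range (nseq k - (M k + 1)), 1 / (1 + q ^ (-(ℓ : ℝ) + β - 1))) atTop
        (nhds (1 - Sg + Tg)) :=
      (tendsto_const_nhds.sub (hsT.comp hM1)).add (htT.comp hNM)
    rw [hg_def]
    exact Tendsto.congr' (hmain_ev.mono fun k hk => hk.symm) hb
  have hfloor_ev : ∀ᶠ k in atTop, ⌊μ k⌋ = m k + δ := by
    filter_upwards [hmuT.eventually (eventually_gt_nhds hbounds.1),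
      hmuT.eventually (eventually_lt_nhds hbounds.2)] with k h1 h2
    rw [Int.floor_eq_iff]
    push_cast
    constructor <;> linarith
  -- the three infinite products
  obtain ⟨hPqH, hPqPos⟩ := KTDN.hasProd_one_sub (z := q) (ε := 1 - q) hq0 hq1
    (by linarith) (fun i => by
      have h1 : q ^ i ≤ 1 := pow_le_one₀ hq0.le hq1.le
      nlinarith [pow_pos hq0 i])
  obtain ⟨hPAH, hPAPos⟩ := KTDN.hasProd_one_sub (z := -q ^ β) (ε := 1) hq0 hq1 one_pos
    (fun i => by nlinarith [Real.rpow_pos_of_pos hq0 β, pow_pos hq0 i])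
  obtain ⟨hPBH, hPBPos⟩ := KTDN.hasProd_one_sub (z := -q ^ (1 - β)) (ε := 1) hq0 hq1 one_pos
    (fun i => by nlinarith [Real.rpow_pos_of_pos hq0 (1 - β), pow_pos hq0 i])
  set Pq : ℝ := ∏' i : ℕ, (1 - q * q ^ i) with hPq_def
  set PA : ℝ := ∏' i : ℕ, (1 - (-q ^ β) * q ^ i) with hPA_def
  set PB : ℝ := ∏' i : ℕ, (1 - (-q ^ (1 - β)) * q ^ i) with hPB_def
  have hPoch : Tendsto (fun N => qPoch q q N) atTop (nhds Pq) := hPqH.tendsto_prod_nat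
  have hPAT : Tendsto (fun N => ∏ ℓ ∈ range N, (1 - (-q ^ β) * q ^ ℓ)) atTop (nhds PA) :=
    hPAH.tendsto_prod_nat
  have hPBT : Tendsto (fun N => ∏ ℓ ∈ range N, (1 - (-q ^ (1 - β)) * q ^ ℓ)) atTop (nhds PB) :=
    hPBH.tendsto_prod_nat
  -- index sequences to infinity
  have hnT : Tendsto nseq atTop atTop := hmono.tendsto_atTop
  have hYT : Tendsto Y atTop atTop := by
    refine tendsto_atTop.2 fun C => ?_
    filter_upwards [hm_ge ((C : ℤ) - j)] with k hk
    simp only [hY_def]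
    omega
  have hnYT : Tendsto (fun k => nseq k - Y k) atTop atTop := by
    refine tendsto_atTop.2 fun C => ?_
    filter_upwards [hd_ge ((C : ℤ) + j), hm_ge (-j)] with k h1 h2
    simp only [hY_def]
    omega
  -- the limit function and its convergence
  have hne1 : Pq * Pq ≠ 0 := by positivity
  have hne2 : PA * PB ≠ 0 := by positivity
  have hGT : Tendsto (fun k =>
      qBinom q (nseq k) (Y k) * q ^ (((j : ℝ) - 1) * ((j : ℝ) - 2 * β) / 2)
        / ((∏ ℓ ∈ range (M k + 1), (1 - (-q ^ β) * q ^ ℓ))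
          * ∏ ℓ ∈ range (nseq k - (M k + 1)), (1 - (-q ^ (1 - β)) * q ^ ℓ))) atTop
      (nhds ((Pq / (Pq * Pq)) * q ^ (((j : ℝ) - 1) * ((j : ℝ) - 2 * β) / 2) / (PA * PB))) := by
    have h1 : Tendsto (fun k => qBinom q (nseq k) (Y k)) atTop (nhds (Pq / (Pq * Pq))) := by
      have := ((hPoch.comp hnT).div
        (((hPoch.comp hYT)).mul (hPoch.comp hnYT)) hne1)
      exact this
    exact (h1.mul_const _).div ((hPAT.comp hM1).mul (hPBT.comp hNM)) hne2
  -- eventual identification of the probability with the limit function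
  have hEv : ∀ᶠ k in atTop,
      kbProb q (q ^ (-f (nseq k))) (nseq k) (⌊μ k⌋ + x)
        = qBinom q (nseq k) (Y k) * q ^ (((j : ℝ) - 1) * ((j : ℝ) - 2 * β) / 2)
          / ((∏ ℓ ∈ range (M k + 1), (1 - (-q ^ β) * q ^ ℓ))
            * ∏ ℓ ∈ range (nseq k - (M k + 1)), (1 - (-q ^ (1 - β)) * q ^ ℓ)) := by
    filter_upwards [hfloor_ev, hm_ge 0, hm_ge (-j), hd_ge 1, hd_ge (j + 1)]
      with k h1 h2 h3 h4 h5
    have hyx : ⌊μ k⌋ + x = m k + j := by rw [h1, hj]; ring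
    rw [hyx, kbProb]
    have hcond : 0 ≤ m k + j ∧ m k + j ≤ ((nseq k : ℕ) : ℤ) := ⟨by omega, by omega⟩
    rw [if_pos hcond]
    have hmM : ((M k : ℕ) : ℝ) = (m k : ℝ) := by
      have h6 : ((m k).toNat : ℤ) = m k := Int.toNat_of_nonneg h2
      simp only [hM_def]
      exact_mod_cast h6
    have hθ : -f (nseq k) = -(((M k : ℕ) : ℝ) + β) := by rw [hFk k, hmM]
    have hYk : (m k + j).toNat = Y k := by simp only [hY_def]
    have hMN : M k + 1 ≤ nseq k := by simp only [hM_def]; omega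
    have hYr : ((Y k : ℕ) : ℝ) = ((M k : ℕ) : ℝ) + (j : ℝ) := by
      have h6 : ((Y k : ℕ) : ℤ) = m k + j := by simp only [hY_def]; omega
      have h7 : ((Y k : ℕ) : ℝ) = (m k : ℝ) + (j : ℝ) := by exact_mod_cast h6
      rw [h7, hmM]
    rw [hθ, hYk]
    exact KTDN.kb_formula hq0 hq1 β (M k) (nseq k) (Y k) j hMN hYr
  -- final value identification
  have hval : (Pq / (Pq * Pq)) * q ^ (((j : ℝ) - 1) * ((j : ℝ) - 2 * β) / 2) / (PA * PB)
      = qExp q q * qExp q (-q ^ β) * qExp q (-q ^ (1 - β)) *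
          q ^ ((((δ : ℝ) + (x : ℝ) - 1) * ((δ : ℝ) + (x : ℝ) - 2 * β)) / 2) := by
    have hjc : (j : ℝ) = (δ : ℝ) + (x : ℝ) := by rw [hj]; push_cast; ring
    rw [qExp, qExp, qExp, ← hPq_def, ← hPA_def, ← hPB_def, hjc]
    have hPqne : Pq ≠ 0 := hPqPos.ne'
    have hPAne : PA ≠ 0 := hPAPos.ne'
    have hPBne : PB ≠ 0 := hPBPos.ne'
    have h9 : Pq / (Pq * Pq) = Pq⁻¹ := by field_simp
    rw [h9, div_eq_mul_inv, mul_inv]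
    ring
  rw [← hval]
  exact Tendsto.congr' (hEv.mono fun k hk => hk.symm) hGT
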